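/- arXiv:2509.07914 — 4 statements merged into one kernel-verified Lean document; each statement's English description precedes it below -/
import Mathlib

section
/- Let g: ℝⁿ → ℝ be convex, differentiable, with g(0) = 0 and g(w) ≥ (1/(2t))‖w‖² for all w, and let δ > 0. With ρ_δ the Gibbs density proportional to e^{−g/δ}, the second moment satisfies ∫ ‖w‖² ρ_δ(w) dw ≤ 2 n t δ. -/
open RealInnerProductSpace MeasureTheory Filter Topology

lemma gauss_int (n : ℕ) {b : ℝ} (hb : 0 < b) :
    Integrable (fun v : EuclideanSpace ℝ (Fin n) => Real.exp (-b * ‖v‖ ^ 2)) := by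
  have h := (GaussianFourier.integrable_cexp_neg_mul_sq_norm_add
      (V := EuclideanSpace ℝ (Fin n)) (b := (b : ℂ)) (by simpa using hb) 0 0).norm
  simp only [Complex.norm_exp] at h
  refine h.congr (Filter.Eventually.of_forall fun v => ?_)
  simp [← Complex.ofReal_pow]

/-- For `g` convex, differentiable, with `g 0 = 0` and quadratic growth
`g w ≥ (1/(2t))‖w‖²`, and `δ > 0`, the Gibbs density `ρ_δ ∝ e^{−g/δ}` has second moment
`∫ ‖w‖² ρ_δ(w) dw ≤ 2 n t δ`. -/
theorem gibbs_second_moment_bound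
    (n : ℕ) (t δ : ℝ) (ht : 0 < t) (hδ : 0 < δ)
    (g : EuclideanSpace ℝ (Fin n) → ℝ)
    (hg_conv : ConvexOn ℝ Set.univ g)
    (hg_diff : Differentiable ℝ g)
    (hg0 : g 0 = 0)
    (hg_growth : ∀ w, g w ≥ (1 / (2 * t)) * ‖w‖ ^ 2)
    (Z : ℝ) (hZ : Z = ∫ w : EuclideanSpace ℝ (Fin n), Real.exp (-(g w) / δ))
    (ρ : EuclideanSpace ℝ (Fin n) → ℝ)
    (hρ : ∀ w, ρ w = Real.exp (-(g w) / δ) / Z) :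
    (∫ w : EuclideanSpace ℝ (Fin n), ‖w‖ ^ 2 * ρ w) ≤ 2 * n * t * δ := by
  have hgc : Continuous g := hg_diff.continuous
  have hgnn : ∀ w, 0 ≤ g w := fun w => le_trans (by positivity) (hg_growth w)
  have hexp_le : ∀ b : ℝ, 0 < b → ∀ w : EuclideanSpace ℝ (Fin n),
      Real.exp (-(g w) / (b * δ)) ≤ Real.exp (-(1/(2*t*b*δ)) * ‖w‖ ^ 2) := by
    intro b hb w
    apply Real.exp_le_exp.2
    have h1 := hg_growth w
    rw [div_le_iff₀ (by positivity)]
    have h2 : -(1/(2*t*b*δ)) * ‖w‖ ^ 2 * (b * δ) = -(1/(2*t)) * ‖w‖ ^ 2 := by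
      field_simp
    rw [h2]; linarith
  have hf0c : Continuous fun w : EuclideanSpace ℝ (Fin n) => Real.exp (-(g w) / δ) :=
    Real.continuous_exp.comp ((hgc.neg).div_const δ)
  have hI0 : Integrable (fun w : EuclideanSpace ℝ (Fin n) => Real.exp (-(g w) / δ)) := by
    refine (gauss_int n (b := 1/(2*t*1*δ)) (by positivity)).mono' hf0c.aestronglyMeasurable
      (Filter.Eventually.of_forall fun w => ?_)
    rw [Real.norm_eq_abs, abs_of_nonneg (Real.exp_pos _).le]
    have h := hexp_le 1 one_pos w
    simpa using h
  have hZpos : 0 < Z := by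
    rw [hZ]
    refine (integral_pos_iff_support_of_nonneg (fun w => (Real.exp_pos _).le) hI0).2 ?_
    have hsupp : Function.support (fun w : EuclideanSpace ℝ (Fin n) => Real.exp (-(g w)/δ))
        = Set.univ := Set.eq_univ_of_forall fun w => (Real.exp_pos _).ne'
    rw [hsupp]
    exact isOpen_univ.measure_pos volume ⟨0, trivial⟩
  have hI1 : Integrable (fun w : EuclideanSpace ℝ (Fin n) => g w * Real.exp (-(g w) / δ)) := by
    have hcont : Continuous fun w : EuclideanSpace ℝ (Fin n) => g w * Real.exp (-(g w)/δ) :=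
      hgc.mul hf0c
    refine ((gauss_int n (b := 1/(2*t*2*δ)) (by positivity)).const_mul (2*δ)).mono'
      hcont.aestronglyMeasurable (Filter.Eventually.of_forall fun w => ?_)
    rw [Real.norm_eq_abs, abs_of_nonneg (mul_nonneg (hgnn w) (Real.exp_pos _).le)]
    have h2 : g w/(2*δ) ≤ Real.exp (g w/(2*δ)) := by
      have := Real.add_one_le_exp (g w/(2*δ)); linarith
    have h1 : g w ≤ 2*δ * Real.exp (g w/(2*δ)) := by
      rw [div_le_iff₀ (by positivity)] at h2; linarith
    calc g w * Real.exp (-(g w)/δ)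
        ≤ (2*δ * Real.exp (g w/(2*δ))) * Real.exp (-(g w)/δ) :=
          mul_le_mul_of_nonneg_right h1 (Real.exp_pos _).le
      _ = 2*δ * Real.exp (-(g w)/(2*δ)) := by
          rw [mul_assoc, ← Real.exp_add]; congr 1; field_simp; ring
      _ ≤ 2*δ * Real.exp (-(1/(2*t*2*δ)) * ‖w‖^2) :=
          mul_le_mul_of_nonneg_left (hexp_le 2 two_pos w) (by positivity)
  set I := ∫ w : EuclideanSpace ℝ (Fin n), g w * Real.exp (-(g w) / δ) with hIdef
  have hkey : ∀ s : ℝ, s ∈ Set.Ioo (0:ℝ) 1 → Z + (1-s)/δ * I ≤ (s ^ n)⁻¹ * Z := by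
    rintro s ⟨hs0, hs1⟩
    have hscale : ∫ w : EuclideanSpace ℝ (Fin n), Real.exp (-(g (s • w)) / δ)
        = (s ^ n)⁻¹ * Z := by
      rw [hZ, MeasureTheory.Measure.integral_comp_smul volume
        (fun w : EuclideanSpace ℝ (Fin n) => Real.exp (-(g w)/δ)) s]
      simp [abs_of_nonneg (inv_nonneg.2 (pow_nonneg hs0.le _)), smul_eq_mul]
    have hpt : ∀ w : EuclideanSpace ℝ (Fin n),
        Real.exp (-(g w)/δ) + (1-s)/δ * (g w * Real.exp (-(g w)/δ))
          ≤ Real.exp (-(g (s • w))/δ) := by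
      intro w
      have hconv : g (s • w) ≤ s * g w := by
        have h := hg_conv.2 (Set.mem_univ w) (Set.mem_univ (0:EuclideanSpace ℝ (Fin n)))
          hs0.le (by linarith : (0:ℝ) ≤ 1 - s) (by ring)
        simpa [hg0] using h
      have h1 : Real.exp (-(s * g w)/δ) ≤ Real.exp (-(g (s • w))/δ) := by
        apply Real.exp_le_exp.2
        exact (div_le_div_iff_of_pos_right hδ).2 (by linarith)
      have h3 : 1 + (1-s)*g w/δ ≤ Real.exp ((1-s)*g w/δ) := by
        have := Real.add_one_le_exp ((1-s)*g w/δ); linarith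
      have h2 : Real.exp (-(g w)/δ) * (1 + (1-s)*g w/δ) ≤ Real.exp (-(s * g w)/δ) := by
        calc Real.exp (-(g w)/δ) * (1 + (1-s)*g w/δ)
            ≤ Real.exp (-(g w)/δ) * Real.exp ((1-s)*g w/δ) :=
              mul_le_mul_of_nonneg_left h3 (Real.exp_pos _).le
          _ = Real.exp (-(s * g w)/δ) := by rw [← Real.exp_add]; congr 1; field_simp; ring
      have heq : Real.exp (-(g w)/δ) + (1-s)/δ * (g w * Real.exp (-(g w)/δ))
          = Real.exp (-(g w)/δ) * (1 + (1-s)*g w/δ) := by field_simp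
      rw [heq]; exact h2.trans h1
    have hint_rhs : Integrable
        (fun w : EuclideanSpace ℝ (Fin n) => Real.exp (-(g (s • w)) / δ)) :=
      (integrable_comp_smul_iff volume
        (fun w : EuclideanSpace ℝ (Fin n) => Real.exp (-(g w)/δ)) (ne_of_gt hs0)).2 hI0
    calc Z + (1-s)/δ * I
        = ∫ w : EuclideanSpace ℝ (Fin n),
            (Real.exp (-(g w)/δ) + (1-s)/δ * (g w * Real.exp (-(g w)/δ))) := by
          rw [integral_add hI0 (hI1.const_mul _), integral_const_mul, ← hZ, ← hIdef]
      _ ≤ ∫ w : EuclideanSpace ℝ (Fin n), Real.exp (-(g (s • w))/δ) :=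
          integral_mono (hI0.add (hI1.const_mul _)) hint_rhs hpt
      _ = (s ^ n)⁻¹ * Z := hscale
  have hI_le : I ≤ δ * n * Z := by
    have hder : HasDerivAt (fun s : ℝ => (s ^ n)⁻¹) (-(n:ℝ)) 1 := by
      have h := (hasDerivAt_pow n (1:ℝ)).inv (by simp)
      simp at h; exact h
    have hslope : Tendsto (slope (fun s : ℝ => (s ^ n)⁻¹) 1) (𝓝[≠] (1:ℝ)) (𝓝 (-(n:ℝ))) :=
      hasDerivAt_iff_tendsto_slope.1 hder
    have hslope' : Tendsto (slope (fun s : ℝ => (s ^ n)⁻¹) 1) (𝓝[<] (1:ℝ)) (𝓝 (-(n:ℝ))) :=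
      hslope.mono_left (nhdsWithin_mono _ fun x hx => ne_of_lt hx)
    have htend : Tendsto (fun s : ℝ => δ * Z * (-(slope (fun s : ℝ => (s ^ n)⁻¹) 1 s)))
        (𝓝[<] (1:ℝ)) (𝓝 (δ * n * Z)) := by
      have h := (hslope'.neg).const_mul (δ * Z)
      convert h using 2
      ring
    refine ge_of_tendsto htend ?_
    filter_upwards [Ioo_mem_nhdsLT_of_mem (by constructor <;> norm_num :
      (1:ℝ) ∈ Set.Ioc (0:ℝ) 1)] with s hs
    have hk := hkey s hs
    obtain ⟨hs0, hs1⟩ := hs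
    have h1s : (0:ℝ) < 1 - s := by linarith
    have hsne : s - 1 ≠ 0 := by intro h; nlinarith
    have h2 : (1-s)/δ * I ≤ (s^n)⁻¹ * Z - Z := by linarith
    have h3 : I ≤ ((s^n)⁻¹ * Z - Z) / ((1-s)/δ) := by
      rw [le_div_iff₀ (by positivity)]
      calc I * ((1-s)/δ) = (1-s)/δ * I := mul_comm _ _
        _ ≤ _ := h2
    refine h3.trans_eq ?_
    rw [slope_def_field]
    have hsn : (0:ℝ) < s ^ n := pow_pos hs0 n
    field_simp
    ring
  have hmain : (∫ w : EuclideanSpace ℝ (Fin n), ‖w‖^2 * Real.exp (-(g w)/δ)) ≤ 2*t*I := by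
    have hle : ∀ w : EuclideanSpace ℝ (Fin n),
        ‖w‖^2 * Real.exp (-(g w)/δ) ≤ 2*t*(g w * Real.exp (-(g w)/δ)) := by
      intro w
      have h1 := hg_growth w
      have h2 : ‖w‖^2 ≤ 2*t*g w := by
        rw [ge_iff_le, div_mul_eq_mul_div, one_mul, div_le_iff₀ (by positivity)] at h1
        linarith
      calc ‖w‖^2 * Real.exp (-(g w)/δ) ≤ (2*t*g w) * Real.exp (-(g w)/δ) :=
            mul_le_mul_of_nonneg_right h2 (Real.exp_pos _).le
        _ = 2*t*(g w * Real.exp (-(g w)/δ)) := by ring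
    have hm := integral_mono_of_nonneg
      (Filter.Eventually.of_forall fun w : EuclideanSpace ℝ (Fin n) => by positivity)
      (hI1.const_mul (2*t)) (Filter.Eventually.of_forall hle)
    rwa [integral_const_mul] at hm
  have hfin : (∫ w : EuclideanSpace ℝ (Fin n), ‖w‖^2 * Real.exp (-(g w)/δ)) ≤ 2*n*t*δ*Z := by
    have h4 : 2*t*I ≤ 2*t*(δ*n*Z) := by nlinarith
    calc (∫ w : EuclideanSpace ℝ (Fin n), ‖w‖^2 * Real.exp (-(g w)/δ))
        ≤ 2*t*I := hmain
      _ ≤ 2*t*(δ*n*Z) := h4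
      _ = 2*n*t*δ*Z := by ring
  calc (∫ w : EuclideanSpace ℝ (Fin n), ‖w‖ ^ 2 * ρ w)
      = (∫ w : EuclideanSpace ℝ (Fin n), ‖w‖^2 * Real.exp (-(g w)/δ)) / Z := by
        simp_rw [hρ, ← mul_div_assoc]
        rw [integral_div]
    _ ≤ 2*n*t*δ := by rw [div_le_iff₀ hZpos]; linarith
end

section
/- Let T: ℝⁿ → ℝⁿ be an averaged operator with Fix(T) ≠ ∅, and let x_{k+1} = T(x_k) + ε_k with Σ_k ‖ε_k‖ < ∞. Then {x_k} converges to a fixed point of T. -/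
open Filter Finset Topology Bornology

private lemma quasiFejer_converges (a e : ℕ → ℝ) (ha : ∀ k, 0 ≤ a k) (he : ∀ k, 0 ≤ e k)
    (hsum : Summable e) (hrec : ∀ k, a (k+1) ≤ a k + e k) :
    ∃ L, Tendsto a atTop (𝓝 L) := by
  set E : ℕ → ℝ := fun k => (∑' n, e n) - ∑ j ∈ range k, e j with hE
  have hEk : ∀ k, E k = e k + E (k+1) := by
    intro k; simp [hE, Finset.sum_range_succ]; ring
  have hEnn : ∀ k, 0 ≤ E k := by
    intro k
    have := Summable.sum_le_tsum (range k) (fun i _ => he i) hsum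
    simpa [hE] using sub_nonneg.mpr this
  have hE0 : Tendsto E atTop (𝓝 0) := by
    have := hsum.hasSum.tendsto_sum_nat
    have : Tendsto (fun k => (∑' n, e n) - ∑ j ∈ range k, e j) atTop
        (𝓝 ((∑' n, e n) - (∑' n, e n))) := tendsto_const_nhds.sub this
    simpa [hE] using this
  set b : ℕ → ℝ := fun k => a k + E k with hb
  have hanti : Antitone b := by
    apply antitone_nat_of_succ_le
    intro k
    have := hrec k
    have h2 := hEk k
    simp only [hb]
    linarith
  have hbdd : BddBelow (Set.range b) := by
    refine ⟨0, ?_⟩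
    rintro _ ⟨k, rfl⟩
    exact add_nonneg (ha k) (hEnn k)
  have hbt : Tendsto b atTop (𝓝 (⨅ i, b i)) := tendsto_atTop_ciInf hanti hbdd
  refine ⟨⨅ i, b i, ?_⟩
  have : Tendsto (fun k => b k - E k) atTop (𝓝 ((⨅ i, b i) - 0)) := hbt.sub hE0
  simpa [hb] using this

private lemma convex_norm_sq {El : Type*} [NormedAddCommGroup El] [InnerProductSpace ℝ El]
    (α : ℝ) (u v : El) :
    ‖(1-α) • u + α • v‖^2 = (1-α)*‖u‖^2 + α*‖v‖^2 - α*(1-α)*‖v - u‖^2 := by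
  have h1 := @norm_add_sq_real El _ _ ((1-α) • u) (α • v)
  have h2 := @norm_sub_sq_real El _ _ v u
  simp only [inner_smul_left, inner_smul_right, norm_smul, Real.norm_eq_abs, map_mul,
    RCLike.conj_to_real] at h1
  rw [real_inner_comm u v] at h2
  nlinarith [sq_abs (1-α), sq_abs α]

set_option maxHeartbeats 1000000 in
/-- If `T` is an averaged operator (i.e. `T = (1−α)I + αS` for some
`α ∈ (0,1)` and nonexpansive `S`) with a fixed point, and `x_{k+1} = T(x_k) + ε_k` with
`Σ‖ε_k‖ < ∞`, then `{x_k}` converges to a fixed point of `T`. -/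
theorem perturbed_averaged_converges
    (n : ℕ) (T : EuclideanSpace ℝ (Fin n) → EuclideanSpace ℝ (Fin n))
    (hT_avg : ∃ α : ℝ, 0 < α ∧ α < 1 ∧
      ∃ S : EuclideanSpace ℝ (Fin n) → EuclideanSpace ℝ (Fin n),
        (∀ x y, ‖S x - S y‖ ≤ ‖x - y‖) ∧ ∀ x, T x = (1 - α) • x + α • S x)
    (hfix : ∃ p, T p = p)
    (x ε : ℕ → EuclideanSpace ℝ (Fin n))
    (hiter : ∀ k, x (k + 1) = T (x k) + ε k)
    (hsum : Summable fun k => ‖ε k‖) :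
    ∃ xstar, T xstar = xstar ∧ Filter.Tendsto x Filter.atTop (nhds xstar) := by
  obtain ⟨α, hα0, hα1, S, hS, hTS⟩ := hT_avg
  obtain ⟨p, hp⟩ := hfix
  set e : ℕ → ℝ := fun k => ‖ε k‖ with he_def
  have he : ∀ k, 0 ≤ e k := fun k => norm_nonneg _
  -- S fixes p
  have hSp : S p = p := by
    have h := hTS p
    rw [hp] at h
    have h2 : α • (S p - p) = (1 - α) • p + α • S p - p := by module
    rw [← hTS p, hp, sub_self] at h2
    have h3 : S p - p = 0 := (smul_eq_zero.mp h2).resolve_left (ne_of_gt hα0)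
    rw [sub_eq_zero] at h3
    exact h3
  -- T nonexpansive
  have hTne : ∀ u v, ‖T u - T v‖ ≤ ‖u - v‖ := by
    intro u v
    have hd : T u - T v = (1-α) • (u - v) + α • (S u - S v) := by
      rw [hTS u, hTS v]; module
    rw [hd]
    calc ‖(1-α) • (u - v) + α • (S u - S v)‖
        ≤ ‖(1-α) • (u - v)‖ + ‖α • (S u - S v)‖ := norm_add_le _ _
      _ = (1-α)*‖u - v‖ + α*‖S u - S v‖ := by
          rw [norm_smul, norm_smul, Real.norm_eq_abs, Real.norm_eq_abs,
            abs_of_nonneg (by linarith : (0:ℝ) ≤ 1-α), abs_of_pos hα0]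
      _ ≤ ‖u - v‖ := by nlinarith [hS u v, norm_nonneg (u - v)]
  have hTp : ∀ u, ‖T u - p‖ ≤ ‖u - p‖ := fun u => by
    have := hTne u p; rwa [hp] at this
  -- key inequality
  have hkey : ∀ u, ‖T u - p‖^2 + ((1-α)/α) * ‖T u - u‖^2 ≤ ‖u - p‖^2 := by
    intro u
    have hd : T u - p = (1-α) • (u - p) + α • (S u - p) := by rw [hTS u]; module
    have h1 : ‖T u - p‖^2 = (1-α)*‖u - p‖^2 + α*‖S u - p‖^2 - α*(1-α)*‖S u - u‖^2 := by
      rw [hd, convex_norm_sq, show (S u - p) - (u - p) = S u - u from by abel]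
    have h2 : ‖S u - p‖ ≤ ‖u - p‖ := by have := hS u p; rwa [hSp] at this
    have h3 : ‖T u - u‖ = α * ‖S u - u‖ := by
      have hdd : T u - u = α • (S u - u) := by rw [hTS u]; module
      rw [hdd, norm_smul, Real.norm_eq_abs, abs_of_pos hα0]
    have h4 : (1-α)/α * (α * ‖S u - u‖)^2 = α*(1-α)*‖S u - u‖^2 := by
      field_simp
    rw [h1, h3, h4]
    nlinarith [mul_self_le_mul_self (norm_nonneg (S u - p)) h2, norm_nonneg (S u - p),
      norm_nonneg (u - p)]
  set a : ℕ → ℝ := fun k => ‖x k - p‖ with ha_def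
  have ha : ∀ k, 0 ≤ a k := fun k => norm_nonneg _
  have hstep : ∀ k, x (k+1) - p = (T (x k) - p) + ε k := by
    intro k; rw [hiter k]; abel
  have hrec : ∀ k, a (k+1) ≤ a k + e k := by
    intro k
    calc a (k+1) = ‖(T (x k) - p) + ε k‖ := by rw [ha_def]; simp only; rw [hstep k]
      _ ≤ ‖T (x k) - p‖ + ‖ε k‖ := norm_add_le _ _
      _ ≤ a k + e k := add_le_add (hTp (x k)) le_rfl
  set Et : ℝ := ∑' k, e k with hEt
  have hEt0 : 0 ≤ Et := tsum_nonneg he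
  set M : ℝ := a 0 + Et with hM
  have hbound : ∀ k, a k ≤ M := by
    intro k
    have hpart : ∀ k, a k ≤ a 0 + ∑ j ∈ range k, e j := by
      intro k
      induction k with
      | zero => simp
      | succ m ih =>
          calc a (m+1) ≤ a m + e m := hrec m
            _ ≤ a 0 + ∑ j ∈ range m, e j + e m := by linarith
            _ = a 0 + ∑ j ∈ range (m+1), e j := by rw [Finset.sum_range_succ]; ring
    calc a k ≤ a 0 + ∑ j ∈ range k, e j := hpart k
      _ ≤ a 0 + Et := by
          have := Summable.sum_le_tsum (range k) (fun i _ => he i) hsum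
          linarith
  have heEt : ∀ k, e k ≤ Et := fun k => Summable.le_tsum hsum k (fun i _ => he i)
  set c : ℝ := (1-α)/α with hc
  have hc0 : 0 < c := div_pos (by linarith) hα0
  set C : ℝ := 2*M + Et with hC
  have hM0 : 0 ≤ M := le_trans (ha 0) (hbound 0)
  have hC0 : 0 ≤ C := by positivity
  -- c * residual² ≤ a k² - a(k+1)² + C e k
  have hsq : ∀ k, c * ‖T (x k) - x k‖^2 ≤ a k ^2 - a (k+1)^2 + C * e k := by
    intro k
    have h4 : a (k+1) ≤ ‖T (x k) - p‖ + e k := by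
      calc a (k+1) = ‖(T (x k) - p) + ε k‖ := by rw [ha_def]; simp only; rw [hstep k]
        _ ≤ ‖T (x k) - p‖ + e k := norm_add_le _ _
    have h5 : ‖T (x k) - p‖ ≤ a k := hTp (x k)
    have h6 := hkey (x k)
    have h7 : a (k+1)^2 ≤ (‖T (x k) - p‖ + e k)^2 := by
      have := mul_self_le_mul_self (ha (k+1)) h4
      nlinarith
    nlinarith [hbound k, heEt k, he k, norm_nonneg (T (x k) - p), ha k, ha (k+1),
      mul_le_mul_of_nonneg_left (heEt k) (he k)]
  -- residual tends to zero
  have hpartial : ∀ N, ∑ k ∈ range N, c * ‖T (x k) - x k‖^2 ≤ a 0 ^2 + C * Et := by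
    intro N
    have htel : ∑ k ∈ range N, (a k ^2 - a (k+1)^2) = a 0 ^2 - a N ^2 :=
      Finset.sum_range_sub' (fun k => a k ^2) N
    calc ∑ k ∈ range N, c * ‖T (x k) - x k‖^2
        ≤ ∑ k ∈ range N, (a k ^2 - a (k+1)^2 + C * e k) :=
          Finset.sum_le_sum fun k _ => hsq k
      _ = (a 0 ^2 - a N ^2) + C * ∑ k ∈ range N, e k := by
          rw [Finset.sum_add_distrib, htel, ← Finset.mul_sum]
      _ ≤ a 0 ^2 + C * Et := by
          have h1 : ∑ k ∈ range N, e k ≤ Et := Summable.sum_le_tsum (range N) (fun i _ => he i) hsum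
          have h2 : 0 ≤ a N ^2 := sq_nonneg _
          have h3 := mul_le_mul_of_nonneg_left h1 hC0
          linarith
  have hr2 : Tendsto (fun k => c * ‖T (x k) - x k‖^2) atTop (𝓝 0) :=
    ((summable_of_sum_range_le (fun k => by positivity) hpartial)).tendsto_atTop_zero
  have hr2' : Tendsto (fun k => ‖T (x k) - x k‖^2) atTop (𝓝 0) := by
    have := hr2.const_mul c⁻¹
    simp only [← mul_assoc, inv_mul_cancel₀ (ne_of_gt hc0), one_mul, mul_zero] at this
    exact this
  have hrt : Tendsto (fun k => ‖T (x k) - x k‖) atTop (𝓝 0) := by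
    have h := (Real.continuous_sqrt.tendsto 0).comp hr2'
    rw [Real.sqrt_zero] at h
    exact h.congr fun k => Real.sqrt_sq (norm_nonneg _)
  have hres : Tendsto (fun k => T (x k) - x k) atTop (𝓝 0) :=
    tendsto_zero_iff_norm_tendsto_zero.mpr hrt
  -- bounded, extract convergent subsequence
  have hmem : ∀ k, x k ∈ Metric.closedBall p M := by
    intro k
    rw [Metric.mem_closedBall, dist_eq_norm]
    exact hbound k
  obtain ⟨xstar, -, φ, hφ, hxφ⟩ :=
    tendsto_subseq_of_bounded (Metric.isBounded_closedBall (x := p) (r := M)) hmem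
  have hTcont : Continuous T := by
    have hl : LipschitzWith 1 T := LipschitzWith.of_dist_le_mul fun u v => by
      simpa [dist_eq_norm] using hTne u v
    exact hl.continuous
  have hfixstar : T xstar = xstar := by
    have h1 : Tendsto (fun j => T (x (φ j)) - x (φ j)) atTop (𝓝 (T xstar - xstar)) :=
      ((hTcont.tendsto xstar).comp hxφ).sub hxφ
    have h2 : Tendsto (fun j => T (x (φ j)) - x (φ j)) atTop (𝓝 0) :=
      hres.comp hφ.tendsto_atTop
    have := tendsto_nhds_unique h1 h2
    rwa [sub_eq_zero] at this
  -- final convergence via quasi-Fejér w.r.t. xstar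
  have hrec' : ∀ k, ‖x (k+1) - xstar‖ ≤ ‖x k - xstar‖ + e k := by
    intro k
    have hstep' : x (k+1) - xstar = (T (x k) - T xstar) + ε k := by
      rw [hiter k, hfixstar]; abel
    calc ‖x (k+1) - xstar‖ = ‖(T (x k) - T xstar) + ε k‖ := by rw [hstep']
      _ ≤ ‖T (x k) - T xstar‖ + e k := norm_add_le _ _
      _ ≤ ‖x k - xstar‖ + e k := add_le_add (hTne _ _) le_rfl
  obtain ⟨L, hL⟩ := quasiFejer_converges (fun k => ‖x k - xstar‖) e
    (fun k => norm_nonneg _) he hsum hrec'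
  have hsub : Tendsto (fun j => ‖x (φ j) - xstar‖) atTop (𝓝 0) :=
    tendsto_iff_norm_sub_tendsto_zero.mp hxφ
  have hLsub : Tendsto (fun j => ‖x (φ j) - xstar‖) atTop (𝓝 L) :=
    hL.comp hφ.tendsto_atTop
  have hL0 : L = 0 := tendsto_nhds_unique hLsub hsub
  refine ⟨xstar, hfixstar, ?_⟩
  rw [hL0] at hL
  exact tendsto_iff_norm_sub_tendsto_zero.mpr hL
end

section
/- Let f, g be proper, LSC, convex with f L-smooth, 0 < t < 2/L, and assume argmin(f+g) ≠ ∅. Consider the inexact proximal gradient iteration x_{k+1} = prox_{tg}(x_k − t∇f(x_k)) + ε_k with Σ_k ‖ε_k‖ < ∞. Then x_k converges to a minimizer of f + g. -/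
open InnerProductSpace RealInnerProductSpace Filter Set

variable {E : Type*} [NormedAddCommGroup E] [InnerProductSpace ℝ E] [CompleteSpace E]

lemma line_hasDerivAt (f : E → ℝ) (hf : Differentiable ℝ f) (x v : E) (s : ℝ) :
    HasDerivAt (fun r : ℝ => f (x + r • v)) ⟪gradient f (x + s • v), v⟫ s := by
  have h1 : HasDerivAt (fun r : ℝ => x + r • v) v s := by
    simpa using ((hasDerivAt_id s).smul_const v).const_add x
  have h2 : HasFDerivAt f (InnerProductSpace.toDual ℝ E (gradient f (x + s • v))) (x + s • v) :=
    ((hf (x + s • v)).hasGradientAt).hasFDerivAt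
  have h3 := h2.comp_hasDerivAt s h1
  exact h3

/-- directional slope tendsto from the right -/
lemma slope_tendsto (f : E → ℝ) (hf : Differentiable ℝ f) (x v : E) :
    Tendsto (fun s : ℝ => (f (x + s • v) - f x) / s) (nhdsWithin 0 (Ioi 0))
      (nhds ⟪gradient f x, v⟫) := by
  have h := (line_hasDerivAt f hf x v 0)
  rw [hasDerivAt_iff_tendsto_slope] at h
  simp only [zero_smul, add_zero] at h
  have h2 : Tendsto (fun s : ℝ => (f (x + s • v) - f x) / s) (nhdsWithin 0 {(0:ℝ)}ᶜ)
      (nhds ⟪gradient f x, v⟫) := by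
    refine h.congr' ?_
    filter_upwards [self_mem_nhdsWithin] with s hs
    simp [slope, vsub_eq_sub, div_eq_inv_mul]
  exact h2.mono_left (nhdsWithin_mono _ (by intro s hs; exact ne_of_gt hs))

lemma convex_first_order (f : E → ℝ) (hconv : ConvexOn ℝ Set.univ f) (hf : Differentiable ℝ f)
    (x z : E) : f x + ⟪gradient f x, z - x⟫ ≤ f z := by
  have hs := slope_tendsto f hf x (z - x)
  have hev : ∀ᶠ s in nhdsWithin (0:ℝ) (Ioi 0),
      (f (x + s • (z - x)) - f x) / s ≤ f z - f x := by
    filter_upwards [Ioc_mem_nhdsGT_of_mem (by norm_num : (0:ℝ) ∈ Ico 0 1)] with s hs'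
    obtain ⟨hs0, hs1⟩ := hs'
    have key : f (x + s • (z - x)) ≤ (1 - s) * f x + s * f z := by
      have h := hconv.2 (mem_univ x) (mem_univ z) (by linarith : (0:ℝ) ≤ 1 - s) hs0.le (by ring)
      have heq : (1 - s) • x + s • z = x + s • (z - x) := by
        simp [smul_sub, sub_smul]; abel
      rw [heq] at h; simpa using h
    rw [div_le_iff₀ hs0]
    nlinarith
  have := le_of_tendsto hs hev
  linarith

lemma descent_lemma (f : E → ℝ) (hf : Differentiable ℝ f) (L : ℝ)
    (hlip : ∀ x y, ‖gradient f x - gradient f y‖ ≤ L * ‖x - y‖) (x y : E) :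
    f y ≤ f x + ⟪gradient f x, y - x⟫ + L / 2 * ‖y - x‖ ^ 2 := by
  set v := y - x with hv
  set φ : ℝ → ℝ := fun s =>
    f (x + s • v) - s * ⟪gradient f x, v⟫ - L * s ^ 2 / 2 * ‖v‖ ^ 2 with hφ
  have hder : ∀ s : ℝ, HasDerivAt φ
      (⟪gradient f (x + s • v), v⟫ - ⟪gradient f x, v⟫ - L * s * ‖v‖ ^ 2) s := by
    intro s
    have h1 := line_hasDerivAt f hf x v s
    have h2 : HasDerivAt (fun s : ℝ => s * ⟪gradient f x, v⟫) ⟪gradient f x, v⟫ s := by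
      simpa using (hasDerivAt_id s).mul_const (⟪gradient f x, v⟫ : ℝ)
    have h3 : HasDerivAt (fun s : ℝ => L * s ^ 2 / 2 * ‖v‖ ^ 2) (L * s * ‖v‖ ^ 2) s := by
      have h4 := (((hasDerivAt_pow 2 s).const_mul L).div_const 2).mul_const (‖v‖ ^ 2)
      refine h4.congr_deriv ?_
      push_cast
      ring
    exact (h1.sub h2).sub h3
  have hmono : AntitoneOn φ (Icc 0 1) := by
    apply antitoneOn_of_deriv_nonpos (convex_Icc 0 1)
    · exact fun s _ => (hder s).continuousAt.continuousWithinAt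
    · intro s hs
      exact ((hder s).differentiableAt).differentiableWithinAt
    · intro s hs
      rw [interior_Icc] at hs
      rw [(hder s).deriv]
      have hcs : ⟪gradient f (x + s • v) - gradient f x, v⟫
          ≤ ‖gradient f (x + s • v) - gradient f x‖ * ‖v‖ := real_inner_le_norm _ _
      have hl := hlip (x + s • v) x
      have hn : ‖x + s • v - x‖ = s * ‖v‖ := by
        simp [norm_smul, abs_of_nonneg hs.1.le]
      rw [hn] at hl
      rw [inner_sub_left] at hcs
      nlinarith [hs.1, norm_nonneg v, norm_nonneg (gradient f (x + s • v) - gradient f x)]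
  have h01 := hmono (left_mem_Icc.2 zero_le_one) (right_mem_Icc.2 zero_le_one) zero_le_one
  have hxy : x + (1:ℝ) • v = y := by simp [hv]
  simp only [hφ, hxy] at h01
  simp only [one_mul, one_pow, zero_smul, add_zero, zero_mul, zero_pow, mul_zero,
    sub_zero, zero_div] at h01
  linarith

lemma strengthened_first_order (f : E → ℝ) (hconv : ConvexOn ℝ Set.univ f)
    (hf : Differentiable ℝ f) (L : ℝ) (hL : 0 < L)
    (hlip : ∀ x y, ‖gradient f x - gradient f y‖ ≤ L * ‖x - y‖) (x z : E) :
    f x + ⟪gradient f x, z - x⟫ + 1 / (2 * L) * ‖gradient f z - gradient f x‖ ^ 2 ≤ f z := by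
  set d := gradient f z - gradient f x with hd
  set w := z - (1 / L) • d with hw
  have h1 := descent_lemma f hf L hlip z w
  have h2 := convex_first_order f hconv hf x w
  have hwz : w - z = -((1 / L) • d) := by rw [hw]; abel
  have hnorm : ‖w - z‖ ^ 2 = (1 / L) ^ 2 * ‖d‖ ^ 2 := by
    rw [hwz, norm_neg, norm_smul, Real.norm_eq_abs, abs_of_nonneg (by positivity : (0:ℝ) ≤ 1 / L),
      mul_pow]
  have hi1 : ⟪gradient f z, w - z⟫ = -(1 / L * ⟪gradient f z, d⟫) := by
    rw [hwz, inner_neg_right, real_inner_smul_right]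
  have hi2 : ⟪gradient f x, w - x⟫ = ⟪gradient f x, z - x⟫ - 1 / L * ⟪gradient f x, d⟫ := by
    have : w - x = (z - x) - (1 / L) • d := by rw [hw]; abel
    rw [this, inner_sub_right, real_inner_smul_right]
  have hi3 : ⟪gradient f z, d⟫ - ⟪gradient f x, d⟫ = ‖d‖ ^ 2 := by
    rw [← inner_sub_left, ← hd, real_inner_self_eq_norm_sq]
  rw [hnorm, hi1] at h1
  rw [hi2] at h2
  have key := le_trans h2 h1
  have e1 : L / 2 * ((1 / L) ^ 2 * ‖d‖ ^ 2) = 1 / (2 * L) * ‖d‖ ^ 2 := by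
    field_simp
  have e2 : 1 / L * ⟪gradient f z, d⟫ - 1 / L * ⟪gradient f x, d⟫ = 1 / L * ‖d‖ ^ 2 := by
    rw [← mul_sub, hi3]
  have e3 : 1 / L * ‖d‖ ^ 2 = 2 * (1 / (2 * L) * ‖d‖ ^ 2) := by
    field_simp
  rw [e1] at key
  linarith

lemma coco (f : E → ℝ) (hconv : ConvexOn ℝ Set.univ f)
    (hf : Differentiable ℝ f) (L : ℝ) (hL : 0 < L)
    (hlip : ∀ x y, ‖gradient f x - gradient f y‖ ≤ L * ‖x - y‖) (x y : E) :
    1 / L * ‖gradient f x - gradient f y‖ ^ 2 ≤ ⟪gradient f x - gradient f y, x - y⟫ := by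
  have h1 := strengthened_first_order f hconv hf L hL hlip x y
  have h2 := strengthened_first_order f hconv hf L hL hlip y x
  have hrev : ‖gradient f x - gradient f y‖ = ‖gradient f y - gradient f x‖ := norm_sub_rev _ _
  have hi : ⟪gradient f x, y - x⟫ + ⟪gradient f y, x - y⟫
      = -⟪gradient f x - gradient f y, x - y⟫ := by
    rw [inner_sub_left]
    have : (y - x : E) = -(x - y) := by abel
    rw [this, inner_neg_right]
    ring
  rw [hrev]
  rw [hrev] at h2
  have e : 1 / (2 * L) * ‖gradient f y - gradient f x‖ ^ 2
      + 1 / (2 * L) * ‖gradient f y - gradient f x‖ ^ 2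
      = 1 / L * ‖gradient f y - gradient f x‖ ^ 2 := by
    field_simp; ring
  linarith

lemma prox_var (t : ℝ) (ht : 0 < t) (g : E → ℝ) (hg : ConvexOn ℝ Set.univ g)
    (proxg : E → E)
    (hproxg : ∀ y, IsMinOn (fun w => g w + (1 / (2 * t)) * ‖w - y‖ ^ 2) Set.univ (proxg y))
    (y z : E) :
    g (proxg y) + 1 / t * ⟪y - proxg y, z - proxg y⟫ ≤ g z := by
  set p := proxg y with hp
  set I := (⟪p - y, z - p⟫ : ℝ) with hI
  set N := ‖z - p‖ ^ 2 with hN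
  have key : ∀ l : ℝ, l ∈ Ioc (0:ℝ) 1 →
      g p - g z ≤ 1 / t * I + l / (2 * t) * N := by
    intro l hl
    obtain ⟨hl0, hl1⟩ := hl
    have hmin : g p + 1 / (2 * t) * ‖p - y‖ ^ 2
        ≤ g (p + l • (z - p)) + 1 / (2 * t) * ‖p + l • (z - p) - y‖ ^ 2 :=
      (hproxg y) (mem_univ (p + l • (z - p)))
    have hconv : g (p + l • (z - p)) ≤ (1 - l) * g p + l * g z := by
      have h := hg.2 (mem_univ p) (mem_univ z) (by linarith : (0:ℝ) ≤ 1 - l) hl0.le (by ring)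
      have heq : (1 - l) • p + l • z = p + l • (z - p) := by
        simp [smul_sub, sub_smul]; abel
      rw [heq] at h; simpa using h
    have hnorm : ‖p + l • (z - p) - y‖ ^ 2
        = ‖p - y‖ ^ 2 + 2 * (l * I) + l ^ 2 * N := by
      have harr : p + l • (z - p) - y = (p - y) + l • (z - p) := by abel
      rw [harr, norm_add_sq_real, real_inner_smul_right, norm_smul, Real.norm_eq_abs,
        abs_of_nonneg hl0.le, mul_pow]
    rw [hnorm] at hmin
    have hexp : 1 / (2 * t) * (‖p - y‖ ^ 2 + 2 * (l * I) + l ^ 2 * N)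
        = 1 / (2 * t) * ‖p - y‖ ^ 2 + l * (1 / t * I) + l * (l / (2 * t) * N) := by
      field_simp
    rw [hexp] at hmin
    have hml : l * (g p - g z) ≤ l * (1 / t * I + l / (2 * t) * N) := by
      have : l * (1 / t * I + l / (2 * t) * N) = l * (1 / t * I) + l * (l / (2 * t) * N) := by
        ring
      rw [this]
      linarith
    exact le_of_mul_le_mul_left hml hl0
  have hlim : Tendsto (fun l : ℝ => 1 / t * I + l / (2 * t) * N) (nhdsWithin 0 (Ioi 0))
      (nhds (1 / t * I)) := by
    have hc : Continuous fun l : ℝ => 1 / t * I + l / (2 * t) * N := by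
      continuity
    have h0 := (hc.tendsto 0).mono_left (nhdsWithin_le_nhds (s := Ioi (0:ℝ)))
    simpa using h0
  have hfin : g p - g z ≤ 1 / t * I :=
    ge_of_tendsto hlim (by
      filter_upwards [Ioc_mem_nhdsGT_of_mem (by norm_num : (0:ℝ) ∈ Ico 0 1)] with l hl
      exact key l hl)
  have hflip : (⟪y - p, z - p⟫ : ℝ) = -I := by
    rw [hI, ← inner_neg_left]; congr 1; abel
  rw [hflip]
  linarith

lemma prox_firm (t : ℝ) (ht : 0 < t) (g : E → ℝ) (hg : ConvexOn ℝ Set.univ g)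
    (proxg : E → E)
    (hproxg : ∀ y, IsMinOn (fun w => g w + (1 / (2 * t)) * ‖w - y‖ ^ 2) Set.univ (proxg y))
    (u v : E) :
    ‖proxg u - proxg v‖ ^ 2 ≤ ⟪u - v, proxg u - proxg v⟫ := by
  set p := proxg u with hp
  set q := proxg v with hq
  have h1 := prox_var t ht g hg proxg hproxg u q
  have h2 := prox_var t ht g hg proxg hproxg v p
  have hadd : (⟪u - p, q - p⟫ : ℝ) + ⟪v - q, p - q⟫ ≤ 0 := by
    have hsum : 1 / t * ⟪u - p, q - p⟫ + 1 / t * ⟪v - q, p - q⟫ ≤ 0 := by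
      rw [hp, hq] at *; linarith
    have hd : 1 / t * ((⟪u - p, q - p⟫ : ℝ) + ⟪v - q, p - q⟫)
        = 1 / t * ⟪u - p, q - p⟫ + 1 / t * ⟪v - q, p - q⟫ := by ring
    have ht' : (0:ℝ) < 1 / t := by positivity
    nlinarith [hsum, hd]
  have e1 : (⟪v - q, p - q⟫ : ℝ) = -⟪v - q, q - p⟫ := by
    rw [← inner_neg_right]; congr 1; abel
  have e2 : (⟪u - p, q - p⟫ : ℝ) - ⟪v - q, q - p⟫ = ⟪(u - v) - (p - q), q - p⟫ := by
    rw [← inner_sub_left]; congr 1; abel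
  have e3 : (⟪(u - v) - (p - q), q - p⟫ : ℝ) = -⟪u - v, p - q⟫ + ‖p - q‖ ^ 2 := by
    rw [inner_sub_left]
    have hqp : (q - p : E) = -(p - q) := by abel
    rw [hqp, inner_neg_right, inner_neg_right, real_inner_self_eq_norm_sq]
    ring
  linarith

lemma prox_nonexp (t : ℝ) (ht : 0 < t) (g : E → ℝ) (hg : ConvexOn ℝ Set.univ g)
    (proxg : E → E)
    (hproxg : ∀ y, IsMinOn (fun w => g w + (1 / (2 * t)) * ‖w - y‖ ^ 2) Set.univ (proxg y))
    (u v : E) :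
    ‖proxg u - proxg v‖ ≤ ‖u - v‖ := by
  have h := prox_firm t ht g hg proxg hproxg u v
  have hcs := real_inner_le_norm (u - v) (proxg u - proxg v)
  rcases eq_or_lt_of_le (norm_nonneg (proxg u - proxg v)) with h0 | h0
  · rw [← h0]; exact norm_nonneg _
  · nlinarith

lemma min_is_fixed (f : E → ℝ) (hfc : ConvexOn ℝ Set.univ f) (hf : Differentiable ℝ f)
    (g : E → ℝ) (hg : ConvexOn ℝ Set.univ g) (t : ℝ) (ht : 0 < t)
    (proxg : E → E)
    (hproxg : ∀ y, IsMinOn (fun w => g w + (1 / (2 * t)) * ‖w - y‖ ^ 2) Set.univ (proxg y))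
    (z : E) (hz : IsMinOn (fun w => f w + g w) Set.univ z) :
    proxg (z - t • gradient f z) = z := by
  -- step 1 : -∇f z is a subgradient of g at z
  have step1 : ∀ w : E, g z - ⟪gradient f z, w - z⟫ ≤ g w := by
    intro w
    have hs := slope_tendsto f hf z (w - z)
    have hsn : Tendsto (fun l : ℝ => -((f (z + l • (w - z)) - f z) / l))
        (nhdsWithin 0 (Ioi 0)) (nhds (-⟪gradient f z, w - z⟫)) := hs.neg
    have hev : ∀ᶠ l in nhdsWithin (0:ℝ) (Ioi 0),
        -((f (z + l • (w - z)) - f z) / l) ≤ g w - g z := by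
      filter_upwards [Ioc_mem_nhdsGT_of_mem (by norm_num : (0:ℝ) ∈ Ico 0 1)] with l hl
      obtain ⟨hl0, hl1⟩ := hl
      have hmin : f z + g z ≤ f (z + l • (w - z)) + g (z + l • (w - z)) :=
        hz (mem_univ (z + l • (w - z)))
      have hconv : g (z + l • (w - z)) ≤ (1 - l) * g z + l * g w := by
        have h := hg.2 (mem_univ z) (mem_univ w) (by linarith : (0:ℝ) ≤ 1 - l) hl0.le (by ring)
        have heq : (1 - l) • z + l • w = z + l • (w - z) := by
          simp [smul_sub, sub_smul]; abel
        rw [heq] at h; simpa using h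
      rw [neg_le, le_div_iff₀ hl0]
      nlinarith
    have := le_of_tendsto hsn hev
    linarith
  -- step 2 : z satisfies the prox variational inequality hence equals prox
  set y := z - t • gradient f z with hy
  set p := proxg y with hp
  have h1 : g p + 1 / t * ⟪y - p, z - p⟫ ≤ g z := prox_var t ht g hg proxg hproxg y z
  have h2 : g z - ⟪gradient f z, p - z⟫ ≤ g p := step1 p
  have hyz : (⟪y - z, p - z⟫ : ℝ) = -(t * ⟪gradient f z, p - z⟫) := by
    have : (y - z : E) = -(t • gradient f z) := by rw [hy]; abel
    rw [this, inner_neg_left, real_inner_smul_left]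
  have hgi : -⟪gradient f z, p - z⟫ = 1 / t * ⟪y - z, p - z⟫ := by
    rw [hyz]; field_simp
  have hsum : 1 / t * ⟪y - p, z - p⟫ + 1 / t * ⟪y - z, p - z⟫ ≤ 0 := by
    rw [← hgi]; linarith
  have hkey : (⟪y - p, z - p⟫ : ℝ) + ⟪y - z, p - z⟫ ≤ 0 := by
    have ht' : (0:ℝ) < 1 / t := by positivity
    nlinarith [hsum]
  have hid : (⟪y - p, z - p⟫ : ℝ) + ⟪y - z, p - z⟫ = ‖z - p‖ ^ 2 := by
    have e1 : (⟪y - z, p - z⟫ : ℝ) = -⟪y - z, z - p⟫ := by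
      rw [← inner_neg_right]; congr 1; abel
    rw [e1, ← sub_eq_add_neg, ← inner_sub_left]
    have e3 : (y - p) - (y - z) = z - p := by abel
    rw [e3, real_inner_self_eq_norm_sq]
  rw [hid] at hkey
  have hzp : ‖z - p‖ = 0 := le_antisymm (by nlinarith [norm_nonneg (z - p)]) (norm_nonneg _)
  have := sub_eq_zero.1 (norm_eq_zero.1 hzp)
  rw [hp] at this; exact this.symm

lemma fixed_is_min (f : E → ℝ) (hfc : ConvexOn ℝ Set.univ f) (hf : Differentiable ℝ f)
    (g : E → ℝ) (hg : ConvexOn ℝ Set.univ g) (t : ℝ) (ht : 0 < t)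
    (proxg : E → E)
    (hproxg : ∀ y, IsMinOn (fun w => g w + (1 / (2 * t)) * ‖w - y‖ ^ 2) Set.univ (proxg y))
    (z : E) (hz : proxg (z - t • gradient f z) = z) :
    IsMinOn (fun w => f w + g w) Set.univ z := by
  intro w _
  have h1 := prox_var t ht g hg proxg hproxg (z - t • gradient f z) w
  rw [hz] at h1
  have he : (z - t • gradient f z - z : E) = -(t • gradient f z) := by abel
  rw [he, inner_neg_left, real_inner_smul_left] at h1
  have he2 : 1 / t * -(t * ⟪gradient f z, w - z⟫) = -⟪gradient f z, w - z⟫ := by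
    field_simp
  rw [he2] at h1
  have h2 := convex_first_order f hfc hf z w
  simp only [Set.mem_setOf_eq]
  linarith

lemma T_contract (f : E → ℝ) (hfc : ConvexOn ℝ Set.univ f) (hf : Differentiable ℝ f)
    (L : ℝ) (hL : 0 < L)
    (hlip : ∀ x y, ‖gradient f x - gradient f y‖ ≤ L * ‖x - y‖)
    (g : E → ℝ) (hg : ConvexOn ℝ Set.univ g) (t : ℝ) (ht : 0 < t) (htL : t * L < 2)
    (proxg : E → E)
    (hproxg : ∀ y, IsMinOn (fun w => g w + (1 / (2 * t)) * ‖w - y‖ ^ 2) Set.univ (proxg y))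
    (z : E) (hz : proxg (z - t • gradient f z) = z) (w : E) :
    ‖proxg (w - t • gradient f w) - z‖ ^ 2
      + min 1 (2 / (t * L) - 1) / 2 * ‖w - proxg (w - t • gradient f w)‖ ^ 2
      ≤ ‖w - z‖ ^ 2 := by
  set c := min 1 (2 / (t * L) - 1) / 2 with hc
  set Tw := proxg (w - t • gradient f w) with hTw
  set d := gradient f w - gradient f z with hd
  set A := (w - t • gradient f w) - (z - t • gradient f z) with hA
  set B := Tw - z with hB
  set s := w - Tw with hs
  have hAeq : A = (w - z) - t • d := by
    rw [hA, hd, smul_sub]; abel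
  have hAn : ‖A‖ ^ 2 = ‖w - z‖ ^ 2 - 2 * (t * ⟪d, w - z⟫) + t ^ 2 * ‖d‖ ^ 2 := by
    rw [hAeq, norm_sub_sq_real, real_inner_smul_right, norm_smul, Real.norm_eq_abs,
      abs_of_nonneg ht.le, mul_pow, real_inner_comm]
  have hfirm : ‖B‖ ^ 2 ≤ ⟪A, B⟫ := by
    have h := prox_firm t ht g hg proxg hproxg (w - t • gradient f w) (z - t • gradient f z)
    rw [hz] at h
    exact h
  have hABn : ‖A - B‖ ^ 2 = ‖A‖ ^ 2 - 2 * ⟪A, B⟫ + ‖B‖ ^ 2 := norm_sub_sq_real A B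
  have hsub : s - t • d = A - B := by
    rw [hs, hAeq, hB]; abel
  have htd : ‖t • d‖ ^ 2 = t ^ 2 * ‖d‖ ^ 2 := by
    rw [norm_smul, Real.norm_eq_abs, abs_of_nonneg ht.le, mul_pow]
  have hs2 : ‖s‖ ^ 2 ≤ 2 * ‖A - B‖ ^ 2 + 2 * (t ^ 2 * ‖d‖ ^ 2) := by
    have hsplit : s = (s - t • d) + t • d := by abel
    have hexp : ‖s‖ ^ 2 = ‖A - B‖ ^ 2 + 2 * ⟪A - B, t • d⟫ + ‖t • d‖ ^ 2 := by
      conv_lhs => rw [hsplit, hsub]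
      rw [norm_add_sq_real]
    rw [hexp, htd]
    nlinarith [real_inner_le_norm (A - B) (t • d), sq_nonneg (‖A - B‖ - ‖t • d‖),
      norm_nonneg (A - B), norm_nonneg (t • d), htd]
  have hcoco := coco f hfc hf L hL hlip w z
  rw [← hd] at hcoco
  -- ‖A‖² ≤ ‖w - z‖² - (2 t / L - t²) ‖d‖²
  have hAle : ‖A‖ ^ 2 ≤ ‖w - z‖ ^ 2 - (2 * t / L - t ^ 2) * ‖d‖ ^ 2 := by
    have hmul := mul_le_mul_of_nonneg_left hcoco (by linarith : (0:ℝ) ≤ 2 * t)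
    have he : 2 * t * (1 / L * ‖d‖ ^ 2) = 2 * t / L * ‖d‖ ^ 2 := by ring
    rw [he] at hmul
    rw [hAn]
    nlinarith [hmul]
  have hc0 : 0 ≤ c := by
    have h1 : (0:ℝ) < 2 / (t * L) - 1 := by
      have htL0 : 0 < t * L := by positivity
      rw [sub_pos, lt_div_iff₀ htL0]
      linarith
    have h2 := lt_min one_pos h1
    rw [hc]; linarith
  have hc1 : 2 * c ≤ 1 := by
    have := min_le_left 1 (2 / (t * L) - 1)
    rw [hc]; linarith
  have hc2 : 2 * c ≤ 2 / (t * L) - 1 := by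
    have := min_le_right 1 (2 / (t * L) - 1)
    rw [hc]; linarith
  have h2 : 2 * c * t ^ 2 ≤ 2 * t / L - t ^ 2 := by
    have hm := mul_le_mul_of_nonneg_right hc2 (sq_nonneg t)
    have he : (2 / (t * L) - 1) * t ^ 2 = 2 * t / L - t ^ 2 := by
      field_simp
    rw [he] at hm
    linarith
  have hfin1 : ‖B‖ ^ 2 + ‖A - B‖ ^ 2 ≤ ‖A‖ ^ 2 := by linarith
  have hfin2 := mul_le_mul_of_nonneg_left hs2 hc0
  have e4 : c * (2 * ‖A - B‖ ^ 2 + 2 * (t ^ 2 * ‖d‖ ^ 2))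
      = 2 * c * ‖A - B‖ ^ 2 + 2 * c * t ^ 2 * ‖d‖ ^ 2 := by ring
  have e5 : c * ‖s‖ ^ 2 ≤ 2 * c * ‖A - B‖ ^ 2 + 2 * c * t ^ 2 * ‖d‖ ^ 2 := by
    rw [← e4]; exact hfin2
  have e6 : 2 * c * ‖A - B‖ ^ 2 ≤ ‖A - B‖ ^ 2 := by
    have h := mul_le_mul_of_nonneg_right hc1 (sq_nonneg ‖A - B‖)
    linarith
  have e7 : 2 * c * t ^ 2 * ‖d‖ ^ 2 ≤ (2 * t / L - t ^ 2) * ‖d‖ ^ 2 :=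
    mul_le_mul_of_nonneg_right h2 (sq_nonneg ‖d‖)
  linarith [hfin1, hAle, e5, e6, e7]

/-- For `f, g` proper, LSC, convex with `f` `L`-smooth, `0 < t < 2/L`,
and `argmin(f+g) ≠ ∅`, the inexact proximal gradient iteration
`x_{k+1} = prox_{tg}(x_k − t∇f(x_k)) + ε_k` with `Σ‖ε_k‖ < ∞` converges to a minimizer
of `f + g`. -/
theorem inexact_prox_grad_converges
    (n : ℕ) (L t : ℝ) (hL : 0 < L)
    (f g : EuclideanSpace ℝ (Fin n) → ℝ)
    (hf_conv : ConvexOn ℝ Set.univ f)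
    (hf_diff : Differentiable ℝ f)
    (hf_smooth : ∀ x y, ‖gradient f x - gradient f y‖ ≤ L * ‖x - y‖)
    (hg_conv : ConvexOn ℝ Set.univ g)
    (hg_lsc : LowerSemicontinuous g)
    (ht : 0 < t) (ht2 : t < 2 / L)
    (hargmin : ∃ z, IsMinOn (fun w => f w + g w) Set.univ z)
    (proxg : EuclideanSpace ℝ (Fin n) → EuclideanSpace ℝ (Fin n))
    (hproxg : ∀ y, IsMinOn (fun z => g z + (1 / (2 * t)) * ‖z - y‖ ^ 2) Set.univ (proxg y))
    (x ε : ℕ → EuclideanSpace ℝ (Fin n))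
    (hiter : ∀ k, x (k + 1) = proxg (x k - t • gradient f (x k)) + ε k)
    (hsum : Summable fun k => ‖ε k‖) :
    ∃ xstar, IsMinOn (fun w => f w + g w) Set.univ xstar ∧
      Filter.Tendsto x Filter.atTop (nhds xstar) := by
  classical
  have htL : t * L < 2 := (lt_div_iff₀ hL).1 ht2
  set T : EuclideanSpace ℝ (Fin n) → EuclideanSpace ℝ (Fin n) :=
    fun w => proxg (w - t • gradient f w) with hT
  obtain ⟨z0, hz0min⟩ := hargmin
  have hz0 : T z0 = z0 :=
    min_is_fixed f hf_conv hf_diff g hg_conv t ht proxg hproxg z0 hz0min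
  set c := min 1 (2 / (t * L) - 1) / 2 with hc
  have hc0 : 0 < c := by
    have h1 : (0:ℝ) < 2 / (t * L) - 1 := by
      have htL0 : 0 < t * L := by positivity
      rw [sub_pos, lt_div_iff₀ htL0]
      linarith
    have h2 := lt_min one_pos h1
    rw [hc]; positivity
  have hcontract : ∀ z w, T z = z →
      ‖T w - z‖ ^ 2 + c * ‖w - T w‖ ^ 2 ≤ ‖w - z‖ ^ 2 := by
    intro z w hz
    exact T_contract f hf_conv hf_diff L hL hf_smooth g hg_conv t ht htL proxg hproxg z hz w
  have hTnonexp : ∀ z w, T z = z → ‖T w - z‖ ≤ ‖w - z‖ := by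
    intro z w hz
    have h := hcontract z w hz
    nlinarith [norm_nonneg (T w - z), norm_nonneg (w - z),
      mul_nonneg hc0.le (sq_nonneg ‖w - T w‖)]
  set e : ℕ → ℝ := fun k => ‖ε k‖ with he
  have he0 : ∀ k, 0 ≤ e k := fun k => norm_nonneg _
  set tail : ℕ → ℝ := fun m => ∑' i, e (i + m) with htaildef
  have htailsummable : ∀ m : ℕ, Summable fun i => e (i + m) := fun m =>
    (summable_nat_add_iff m).2 hsum
  have htail_nonneg : ∀ m, 0 ≤ tail m := fun m => tsum_nonneg (fun i => he0 _)
  have hsum_tail : ∀ m k, (∑ i ∈ Finset.range k, e (m + i)) ≤ tail m := by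
    intro m k
    have heq : (∑ i ∈ Finset.range k, e (m + i)) = ∑ i ∈ Finset.range k, e (i + m) := by
      refine Finset.sum_congr rfl fun i _ => by rw [add_comm]
    rw [heq]
    exact Summable.sum_le_tsum (Finset.range k) (fun i _ => he0 _) (htailsummable m)
  have htail0 : Filter.Tendsto tail Filter.atTop (nhds 0) := tendsto_sum_nat_add e
  -- quasi-Fejér inequalities
  have hqf : ∀ z, T z = z → ∀ k, ‖x (k + 1) - z‖ ≤ ‖x k - z‖ + e k := by
    intro z hz k
    rw [hiter k]
    have harr : proxg (x k - t • gradient f (x k)) + ε k - z = (T (x k) - z) + ε k := by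
      rw [hT]; abel
    rw [harr]
    exact le_trans (norm_add_le _ _) (add_le_add_left (hTnonexp z (x k) hz) _)
  have hqf2 : ∀ z, T z = z → ∀ m k,
      ‖x (m + k) - z‖ ≤ ‖x m - z‖ + ∑ i ∈ Finset.range k, e (m + i) := by
    intro z hz m k
    induction k with
    | zero => simp
    | succ k ih =>
      have h1 := hqf z hz (m + k)
      rw [Finset.sum_range_succ]
      have : m + (k + 1) = (m + k) + 1 := rfl
      rw [this]
      linarith
  have hqf3 : ∀ z, T z = z → ∀ m k, ‖x (m + k) - z‖ ≤ ‖x m - z‖ + tail m := by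
    intro z hz m k
    exact le_trans (hqf2 z hz m k) (add_le_add_right (hsum_tail m k) _)
  -- boundedness
  set M : ℝ := ‖x 0 - z0‖ + tail 0 with hM
  have hbound : ∀ k, ‖x k - z0‖ ≤ M := by
    intro k
    have := hqf3 z0 hz0 0 k
    simpa using this
  have hM0 : 0 ≤ M := le_trans (norm_nonneg _) (hbound 0)
  -- residuals tend to zero
  set r : ℕ → ℝ := fun k => ‖x k - T (x k)‖ with hr
  have hek : ∀ k, e k ≤ tail 0 := by
    intro k
    have := Summable.le_tsum (htailsummable 0) k (fun i _ => he0 _)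
    simpa [htaildef] using this
  have hkey : ∀ k, c * r k ^ 2 ≤ ‖x k - z0‖ ^ 2 - ‖x (k + 1) - z0‖ ^ 2
      + e k * (2 * M + tail 0) := by
    intro k
    have h1 := hcontract z0 (x k) hz0
    have h2 : ‖x (k + 1) - z0‖ ≤ ‖T (x k) - z0‖ + e k := by
      rw [hiter k]
      have harr : proxg (x k - t • gradient f (x k)) + ε k - z0 = (T (x k) - z0) + ε k := by
        rw [hT]; abel
      rw [harr]
      exact norm_add_le _ _
    have h3 : ‖T (x k) - z0‖ ≤ M := le_trans (hTnonexp z0 (x k) hz0) (hbound k)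
    have h4 : ‖x (k + 1) - z0‖ ^ 2 ≤ (‖T (x k) - z0‖ + e k) ^ 2 := by
      have := norm_nonneg (x (k + 1) - z0)
      nlinarith [h2, norm_nonneg (x (k + 1) - z0), norm_nonneg (T (x k) - z0), he0 k]
    nlinarith [h1, h4, h3, he0 k, hek k, norm_nonneg (T (x k) - z0)]
  have hKnn : 0 ≤ 2 * M + tail 0 := by linarith [hM0, htail_nonneg 0]
  have hrsummable : Summable fun k => r k ^ 2 := by
    apply summable_of_sum_range_le
      (c := (‖x 0 - z0‖ ^ 2 + tail 0 * (2 * M + tail 0)) / c) (fun k => sq_nonneg _)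
    intro N
    rw [le_div_iff₀ hc0]
    have hs1 : ∑ k ∈ Finset.range N, (c * r k ^ 2)
        ≤ ∑ k ∈ Finset.range N,
          ((‖x k - z0‖ ^ 2 - ‖x (k + 1) - z0‖ ^ 2) + e k * (2 * M + tail 0)) :=
      Finset.sum_le_sum fun k _ => by linarith [hkey k]
    rw [Finset.sum_add_distrib, Finset.sum_range_sub' (fun k => ‖x k - z0‖ ^ 2) N,
      ← Finset.sum_mul] at hs1
    have hs2 : (∑ k ∈ Finset.range N, e k) ≤ tail 0 := by
      have h := hsum_tail 0 N
      simpa using h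
    have hs3 : (∑ k ∈ Finset.range N, e k) * (2 * M + tail 0)
        ≤ tail 0 * (2 * M + tail 0) := mul_le_mul_of_nonneg_right hs2 hKnn
    have hs4 : (∑ k ∈ Finset.range N, r k ^ 2) * c = ∑ k ∈ Finset.range N, (c * r k ^ 2) := by
      rw [Finset.sum_mul]
      exact Finset.sum_congr rfl fun k _ => mul_comm _ _
    rw [hs4]
    have hxN : 0 ≤ ‖x N - z0‖ ^ 2 := sq_nonneg _
    linarith [hs1, hs3]
  have hrsq0 : Filter.Tendsto (fun k => r k ^ 2) Filter.atTop (nhds 0) :=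
    hrsummable.tendsto_atTop_zero
  have hr0 : Filter.Tendsto r Filter.atTop (nhds 0) := by
    have hcomp := (Real.continuous_sqrt.tendsto 0).comp hrsq0
    rw [Real.sqrt_zero] at hcomp
    refine hcomp.congr fun k => ?_
    exact Real.sqrt_sq (norm_nonneg _)
  -- subsequence converging to a fixed point
  have hmem : ∀ k, x k ∈ Metric.closedBall z0 M := by
    intro k
    rw [Metric.mem_closedBall, dist_eq_norm]
    exact hbound k
  obtain ⟨xbar, _, φ, hφmono, hφconv⟩ :=
    tendsto_subseq_of_bounded Metric.isBounded_closedBall hmem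
  -- T is continuous
  have hgradlip : LipschitzWith (Real.toNNReal L) (gradient f) := by
    apply LipschitzWith.of_dist_le_mul
    intro a b
    rw [dist_eq_norm, dist_eq_norm]
    calc ‖gradient f a - gradient f b‖ ≤ L * ‖a - b‖ := hf_smooth a b
    _ = (Real.toNNReal L : ℝ) * ‖a - b‖ := by rw [Real.coe_toNNReal L hL.le]
  have hproxlip : LipschitzWith 1 proxg := by
    apply LipschitzWith.of_dist_le_mul
    intro a b
    rw [dist_eq_norm, dist_eq_norm]
    simpa using prox_nonexp t ht g hg_conv proxg hproxg a b
  have hTcont : Continuous T := by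
    apply hproxlip.continuous.comp
    exact continuous_id.sub (hgradlip.continuous.const_smul t)
  have hfix : T xbar = xbar := by
    have h1 : Filter.Tendsto (fun j => x (φ j) - T (x (φ j))) Filter.atTop
        (nhds (xbar - T xbar)) :=
      hφconv.sub ((hTcont.tendsto xbar).comp hφconv)
    have h2 : Filter.Tendsto (fun j => ‖x (φ j) - T (x (φ j))‖) Filter.atTop (nhds 0) :=
      hr0.comp hφmono.tendsto_atTop
    have h3 := tendsto_nhds_unique h1.norm h2
    have h4 : xbar - T xbar = 0 := norm_eq_zero.1 h3
    have := sub_eq_zero.1 h4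
    exact this.symm
  have hminstar : IsMinOn (fun w => f w + g w) Set.univ xbar :=
    fixed_is_min f hf_conv hf_diff g hg_conv t ht proxg hproxg xbar hfix
  refine ⟨xbar, hminstar, ?_⟩
  -- final convergence
  rw [Metric.tendsto_atTop]
  intro δ hδ
  rcases Metric.tendsto_atTop.1 htail0 (δ / 2) (by linarith) with ⟨m1, hm1⟩
  rcases Metric.tendsto_atTop.1 hφconv (δ / 2) (by linarith) with ⟨j1, hj1⟩
  set j := max j1 m1 with hj
  set N := φ j with hN
  refine ⟨N, fun k hk => ?_⟩
  have hNm1 : m1 ≤ N := le_trans (le_max_right j1 m1) (hφmono.le_apply)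
  have htailN : tail N < δ / 2 := by
    have h := hm1 N hNm1
    rw [Real.dist_eq, sub_zero] at h
    exact lt_of_le_of_lt (le_abs_self _) h
  have hxN : ‖x N - xbar‖ < δ / 2 := by
    have h := hj1 j (le_max_left j1 m1)
    rw [dist_eq_norm] at h
    exact h
  have hsplit : N + (k - N) = k := Nat.add_sub_cancel' hk
  have hfinal : ‖x k - xbar‖ ≤ ‖x N - xbar‖ + tail N := by
    have h := hqf3 xbar hfix N (k - N)
    rw [hsplit] at h
    exact h
  rw [dist_eq_norm]
  calc ‖x k - xbar‖ ≤ ‖x N - xbar‖ + tail N := hfinal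
  _ < δ / 2 + δ / 2 := by linarith
  _ = δ := by ring
end

section
/- Let f, g, h be proper, LSC, convex with h L-smooth, 0 < t < 2/L. The Davis–Yin operator T(z) = z − prox_{tf}(z) + prox_{tg}(2 prox_{tf}(z) − z − t∇h(prox_{tf}(z))) is averaged, and if z* ∈ Fix(T) then prox_{tf}(z*) is a minimizer of f + g + h (under a standard constraint qualification ensuring subdifferential sum rules). -/
open RealInnerProductSpace

set_option linter.unusedSectionVars false
set_option maxHeartbeats 1000000

section DYSAux

variable {E : Type*} [NormedAddCommGroup E] [InnerProductSpace ℝ E] [CompleteSpace E]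

/-- Subgradient inequality for the prox point. -/
lemma dys_prox_subgrad (f : E → ℝ) (hf : ConvexOn ℝ Set.univ f) {t : ℝ} (ht : 0 < t)
    {y p : E} (hp : IsMinOn (fun z => f z + (1 / (2 * t)) * ‖z - y‖ ^ 2) Set.univ p)
    (x : E) : ⟪y - p, x - p⟫ ≤ t * (f x - f p) := by
  set d := x - p with hd
  have h2t : (0:ℝ) < 2 * t := by linarith
  have key : ∀ s : ℝ, 0 < s → s ≤ 1 →
      ⟪y - p, d⟫ ≤ t * (f x - f p) + (s / 2) * ‖d‖ ^ 2 := by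
    intro s hs hs1
    have hmin := hp (Set.mem_univ (p + s • d))
    simp only [Set.mem_setOf_eq] at hmin
    have hconv : f (p + s • d) ≤ (1 - s) * f p + s * f x := by
      have harg : p + s • d = (1 - s) • p + s • x := by
        rw [hd]; module
      rw [harg]
      exact hf.2 (Set.mem_univ p) (Set.mem_univ x) (by linarith) hs.le (by ring)
    have hnorm : ‖p + s • d - y‖ ^ 2
        = ‖p - y‖ ^ 2 + 2 * (s * ⟪p - y, d⟫) + s ^ 2 * ‖d‖ ^ 2 := by
      have : p + s • d - y = (p - y) + s • d := by abel
      rw [this, norm_add_sq_real, real_inner_smul_right, norm_smul, Real.norm_eq_abs,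
        abs_of_pos hs, mul_pow]
    have hip : ⟪y - p, d⟫ = - ⟪p - y, d⟫ := by
      rw [show y - p = -(p - y) by abel, inner_neg_left]
    have h1 : (‖p - y‖ ^ 2 - ‖p + s • d - y‖ ^ 2) / (2 * t) ≤ f (p + s • d) - f p := by
      have hsplit : (‖p - y‖ ^ 2 - ‖p + s • d - y‖ ^ 2) / (2 * t)
          = (1 / (2 * t)) * ‖p - y‖ ^ 2 - (1 / (2 * t)) * ‖p + s • d - y‖ ^ 2 := by ring
      rw [hsplit]; linarith [hmin]
    have h2 : ‖p - y‖ ^ 2 - ‖p + s • d - y‖ ^ 2 ≤ (f (p + s • d) - f p) * (2 * t) :=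
      (div_le_iff₀ h2t).mp h1
    rw [hnorm] at h2
    have key2 : s * (-2 * ⟪p - y, d⟫) ≤ s * (2 * t * (f x - f p) + s * ‖d‖ ^ 2) := by
      nlinarith [h2, hconv]
    have key3 := (mul_le_mul_iff_right₀ hs).mp key2
    rw [hip]; linarith
  refine le_of_forall_pos_le_add fun ε hε => ?_
  rcases le_or_gt (‖d‖ ^ 2) 0 with hd0 | hd0
  · have := key 1 one_pos le_rfl
    nlinarith [sq_nonneg ‖d‖]
  · set s := min 1 (2 * ε / ‖d‖ ^ 2) with hs
    have hspos : 0 < s := lt_min one_pos (by positivity)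
    have hle := key s hspos (min_le_left _ _)
    have hsε : (s / 2) * ‖d‖ ^ 2 ≤ ε := by
      have hsle : s ≤ 2 * ε / ‖d‖ ^ 2 := min_le_right _ _
      have : s * ‖d‖ ^ 2 ≤ 2 * ε := by
        calc s * ‖d‖ ^ 2 ≤ (2 * ε / ‖d‖ ^ 2) * ‖d‖ ^ 2 :=
              mul_le_mul_of_nonneg_right hsle hd0.le
          _ = 2 * ε := div_mul_cancel₀ _ hd0.ne'
      linarith
    linarith

/-- Firm nonexpansiveness of prox. -/
lemma dys_prox_firm (f : E → ℝ) (hf : ConvexOn ℝ Set.univ f) {t : ℝ} (ht : 0 < t)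
    {x y p q : E} (hp : IsMinOn (fun z => f z + (1 / (2 * t)) * ‖z - x‖ ^ 2) Set.univ p)
    (hq : IsMinOn (fun z => f z + (1 / (2 * t)) * ‖z - y‖ ^ 2) Set.univ q) :
    ‖p - q‖ ^ 2 ≤ ⟪x - y, p - q⟫ := by
  have h1 := dys_prox_subgrad f hf ht hp q
  have h2 := dys_prox_subgrad f hf ht hq p
  have hsum : ⟪x - p, q - p⟫ + ⟪y - q, p - q⟫ ≤ 0 := by linarith
  have e1 : ⟪x - p, q - p⟫ = -⟪x - y, p - q⟫ + ⟪y - q, q - p⟫ + ⟪p - q, p - q⟫ := by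
    rw [show x - p = (x - y) + (y - q) + (q - p) by abel]
    rw [inner_add_left, inner_add_left]
    rw [show (⟪x - y, q - p⟫ : ℝ) = -⟪x - y, p - q⟫ by
      rw [show q - p = -(p - q) by abel, inner_neg_right]]
    rw [show (⟪q - p, q - p⟫ : ℝ) = ⟪p - q, p - q⟫ by
      rw [show q - p = -(p - q) by abel, inner_neg_neg]]
  have e2 : ⟪y - q, p - q⟫ = -⟪y - q, q - p⟫ := by
    rw [show p - q = -(q - p) by abel, inner_neg_right]
  have e3 : (⟪p - q, p - q⟫ : ℝ) = ‖p - q‖ ^ 2 := real_inner_self_eq_norm_sq _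
  rw [e1, e2] at hsum
  linarith [hsum, e3 ▸ hsum]


lemma dys_line_hasDerivAt' (h : E → ℝ) (hdiff : Differentiable ℝ h) (x d : E) (s : ℝ) :
    HasDerivAt (fun r : ℝ => h (x + r • d)) ⟪gradient h (x + s • d), d⟫ s := by
  have hline : HasDerivAt (fun r : ℝ => x + r • d) d s := by
    simpa using ((hasDerivAt_id s).smul_const d).const_add x
  have hg : HasFDerivAt h ((InnerProductSpace.toDual ℝ E) (gradient h (x + s • d)))
      (x + s • d) :=
    hasGradientAt_iff_hasFDerivAt.mp (hdiff (x + s • d)).hasGradientAt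
  simpa [InnerProductSpace.toDual_apply_apply, Function.comp_def] using hg.comp_hasDerivAt s hline

/-- Gradient inequality for convex differentiable functions. -/
lemma dys_convex_grad_ineq (h : E → ℝ) (hconv : ConvexOn ℝ Set.univ h)
    (hdiff : Differentiable ℝ h) (x y : E) :
    h x + ⟪gradient h x, y - x⟫ ≤ h y := by
  set φ : ℝ → ℝ := fun r => h (x + r • (y - x)) with hφ
  have hφconv : ConvexOn ℝ Set.univ φ := by
    refine ⟨convex_univ, fun u _ v _ a b ha hb hab => ?_⟩
    simp only [hφ, smul_eq_mul]
    have harg2 : x + (a * u + b * v) • (y - x)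
        = a • (x + u • (y - x)) + b • (x + v • (y - x)) := by
      calc x + (a * u + b * v) • (y - x)
          = (a + b) • x + (a * u + b * v) • (y - x) := by rw [hab, one_smul]
        _ = a • (x + u • (y - x)) + b • (x + v • (y - x)) := by module
    rw [harg2]
    exact hconv.2 (Set.mem_univ _) (Set.mem_univ _) ha hb hab
  have hder : HasDerivAt φ ⟪gradient h x, y - x⟫ 0 := by
    have := dys_line_hasDerivAt' h hdiff x (y - x) 0
    simpa using this
  have hslope := hφconv.le_slope_of_hasDerivAt (Set.mem_univ (0:ℝ)) (Set.mem_univ (1:ℝ))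
    one_pos hder
  rw [slope_def_field] at hslope
  simp only [hφ, zero_smul, add_zero, one_smul] at hslope
  have h1 : x + (y - x) = y := by abel
  rw [h1] at hslope
  have : ⟪gradient h x, y - x⟫ ≤ h y - h x := by
    simpa using hslope
  linarith

/-- Descent lemma. -/
lemma dys_descent (h : E → ℝ) (hdiff : Differentiable ℝ h) {L : ℝ} (hL : 0 < L)
    (hsmooth : ∀ x y, ‖gradient h x - gradient h y‖ ≤ L * ‖x - y‖) (x y : E) :
    h y ≤ h x + ⟪gradient h x, y - x⟫ + (L / 2) * ‖y - x‖ ^ 2 := by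
  set d := y - x with hd
  have hgradcont : Continuous (gradient h) := by
    have : LipschitzWith (Real.toNNReal L) (gradient h) := by
      apply LipschitzWith.of_dist_le_mul
      intro a b
      rw [dist_eq_norm, dist_eq_norm, Real.coe_toNNReal L hL.le]
      exact hsmooth a b
    exact this.continuous
  set φ' : ℝ → ℝ := fun s => ⟪gradient h (x + s • d), d⟫ with hφ'
  have hφ'cont : Continuous φ' := by
    apply Continuous.inner
    · exact hgradcont.comp (by continuity)
    · exact continuous_const
  have hftc : ∫ s in (0:ℝ)..1, φ' s = h (x + (1:ℝ) • d) - h (x + (0:ℝ) • d) := by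
    exact intervalIntegral.integral_eq_sub_of_hasDerivAt (f := fun r : ℝ => h (x + r • d))
      (fun s _ => dys_line_hasDerivAt' h hdiff x d s) (hφ'cont.intervalIntegrable 0 1)
  have hub : ∀ s ∈ Set.Icc (0:ℝ) 1, φ' s ≤ ⟪gradient h x, d⟫ + L * ‖d‖ ^ 2 * s := by
    intro s hs
    have h1 : φ' s - ⟪gradient h x, d⟫ = ⟪gradient h (x + s • d) - gradient h x, d⟫ := by
      rw [hφ', inner_sub_left]
    have h2 : ⟪gradient h (x + s • d) - gradient h x, d⟫ ≤ L * s * ‖d‖ ^ 2 := by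
      calc ⟪gradient h (x + s • d) - gradient h x, d⟫
          ≤ ‖gradient h (x + s • d) - gradient h x‖ * ‖d‖ := real_inner_le_norm _ _
        _ ≤ (L * ‖(x + s • d) - x‖) * ‖d‖ := by
            apply mul_le_mul_of_nonneg_right _ (norm_nonneg _)
            exact hsmooth _ _
        _ = L * s * ‖d‖ ^ 2 := by
            rw [show (x + s • d) - x = s • d by abel, norm_smul, Real.norm_eq_abs,
              abs_of_nonneg hs.1]
            ring
    nlinarith [h1, h2]
  have hintle : ∫ s in (0:ℝ)..1, φ' s
      ≤ ∫ s in (0:ℝ)..1, (⟪gradient h x, d⟫ + L * ‖d‖ ^ 2 * s) := by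
    apply intervalIntegral.integral_mono_on zero_le_one (hφ'cont.intervalIntegrable 0 1)
    · exact (Continuous.intervalIntegrable (by continuity) 0 1)
    · exact hub
  have hrhs : ∫ s in (0:ℝ)..1, (⟪gradient h x, d⟫ + L * ‖d‖ ^ 2 * s)
      = ⟪gradient h x, d⟫ + L * ‖d‖ ^ 2 / 2 := by
    rw [intervalIntegral.integral_add (intervalIntegrable_const)
      ((intervalIntegral.intervalIntegrable_id).const_mul _)]
    rw [intervalIntegral.integral_const_mul, integral_id, intervalIntegral.integral_const]
    norm_num
    ring
  have h0 : x + (0:ℝ) • d = x := by simp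
  have h1 : x + (1:ℝ) • d = y := by rw [one_smul, hd]; abel
  rw [h0, h1] at hftc
  rw [hrhs] at hintle
  rw [hftc] at hintle
  linarith

/-- Baillon–Haddad cocoercivity. -/
lemma dys_coco (h : E → ℝ) (hconv : ConvexOn ℝ Set.univ h) (hdiff : Differentiable ℝ h)
    {L : ℝ} (hL : 0 < L)
    (hsmooth : ∀ x y, ‖gradient h x - gradient h y‖ ≤ L * ‖x - y‖) (x y : E) :
    ‖gradient h x - gradient h y‖ ^ 2 ≤ L * ⟪gradient h x - gradient h y, x - y⟫ := by
  have key : ∀ a b : E, h a + ⟪gradient h a, b - a⟫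
      + (1 / (2 * L)) * ‖gradient h b - gradient h a‖ ^ 2 ≤ h b := by
    intro a b
    set v := gradient h b - gradient h a with hv
    set z := b - (1 / L) • v with hz
    have hdesc := dys_descent h hdiff hL hsmooth b z
    have hgrad := dys_convex_grad_ineq h hconv hdiff a z
    have e1 : z - b = -((1 / L) • v) := by rw [hz]; abel
    have e2 : (⟪gradient h b, z - b⟫ : ℝ) = -((1 / L) * ⟪gradient h b, v⟫) := by
      rw [e1, inner_neg_right, real_inner_smul_right]
    have e3 : ‖z - b‖ ^ 2 = (1 / L) ^ 2 * ‖v‖ ^ 2 := by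
      rw [e1, norm_neg, norm_smul, Real.norm_eq_abs, abs_of_pos (by positivity), mul_pow]
    have e4 : (⟪gradient h a, z - a⟫ : ℝ)
        = ⟪gradient h a, b - a⟫ - (1 / L) * ⟪gradient h a, v⟫ := by
      rw [show z - a = (b - a) + -((1 / L) • v) by rw [hz]; abel,
        inner_add_right, inner_neg_right, real_inner_smul_right]
      ring
    have e5 : (⟪gradient h b, v⟫ : ℝ) - ⟪gradient h a, v⟫ = ‖v‖ ^ 2 := by
      rw [← inner_sub_left, ← hv, real_inner_self_eq_norm_sq]
    rw [e2, e3] at hdesc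
    rw [e4] at hgrad
    have hL2 : (L / 2) * ((1 / L) ^ 2 * ‖v‖ ^ 2) = (1 / (2 * L)) * ‖v‖ ^ 2 := by
      field_simp
    have e5' : (1 / L) * ⟪gradient h b, v⟫ - (1 / L) * ⟪gradient h a, v⟫
        = (1 / L) * ‖v‖ ^ 2 := by rw [← mul_sub, e5]
    have e8 : (1 / L) * ‖v‖ ^ 2 - (1 / (2 * L)) * ‖v‖ ^ 2 = (1 / (2 * L)) * ‖v‖ ^ 2 := by
      field_simp
      ring
    linarith [hdesc, hgrad, e5', hL2, e8]
  have k1 := key x y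
  have k2 := key y x
  have e6 : ‖gradient h x - gradient h y‖ = ‖gradient h y - gradient h x‖ := norm_sub_rev _ _
  have e7 : (⟪gradient h x, y - x⟫ : ℝ) + ⟪gradient h y, x - y⟫
      = -⟪gradient h x - gradient h y, x - y⟫ := by
    rw [inner_sub_left, show (⟪gradient h x, y - x⟫ : ℝ) = -⟪gradient h x, x - y⟫ by
      rw [show y - x = -(x - y) by abel, inner_neg_right]]
    ring
  have e6' : ‖gradient h y - gradient h x‖ ^ 2 = ‖gradient h x - gradient h y‖ ^ 2 := by
    rw [norm_sub_rev]
  have h10 : 2 * ((1 / (2 * L)) * ‖gradient h x - gradient h y‖ ^ 2)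
      ≤ ⟪gradient h x - gradient h y, x - y⟫ := by
    rw [e6'] at k1
    linarith [k1, k2, e7]
  have e9 : L * (2 * ((1 / (2 * L)) * ‖gradient h x - gradient h y‖ ^ 2))
      = ‖gradient h x - gradient h y‖ ^ 2 := by field_simp
  calc ‖gradient h x - gradient h y‖ ^ 2
      = L * (2 * ((1 / (2 * L)) * ‖gradient h x - gradient h y‖ ^ 2)) := e9.symm
    _ ≤ L * ⟪gradient h x - gradient h y, x - y⟫ := mul_le_mul_of_nonneg_left h10 hL.le

end DYSAux

/-- For `f, g, h` proper, LSC, convex with `h` `L`-smooth and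
`0 < t < 2/L`, the Davis–Yin operator
`T(z) = z − prox_{tf}(z) + prox_{tg}(2 prox_{tf}(z) − z − t∇h(prox_{tf}(z)))`
is averaged, and if `z*` is a fixed point of `T` then `prox_{tf}(z*)` minimizes
`f + g + h`. (Here `f, g` are real-valued, so constraint qualifications for the
subdifferential sum rule hold automatically.) -/
theorem dys_operator_averaged_and_fixed_points
    (n : ℕ) (L t : ℝ) (hL : 0 < L)
    (f g h : EuclideanSpace ℝ (Fin n) → ℝ)
    (hf_conv : ConvexOn ℝ Set.univ f) (hf_lsc : LowerSemicontinuous f)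
    (hg_conv : ConvexOn ℝ Set.univ g) (hg_lsc : LowerSemicontinuous g)
    (hh_conv : ConvexOn ℝ Set.univ h)
    (hh_diff : Differentiable ℝ h)
    (hh_smooth : ∀ x y, ‖gradient h x - gradient h y‖ ≤ L * ‖x - y‖)
    (ht : 0 < t) (ht2 : t < 2 / L)
    (proxf proxg : EuclideanSpace ℝ (Fin n) → EuclideanSpace ℝ (Fin n))
    (hproxf : ∀ y, IsMinOn (fun z => f z + (1 / (2 * t)) * ‖z - y‖ ^ 2) Set.univ (proxf y))
    (hproxg : ∀ y, IsMinOn (fun z => g z + (1 / (2 * t)) * ‖z - y‖ ^ 2) Set.univ (proxg y))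
    (T : EuclideanSpace ℝ (Fin n) → EuclideanSpace ℝ (Fin n))
    (hT : ∀ z, T z =
      z - proxf z + proxg ((2 : ℝ) • proxf z - z - t • gradient h (proxf z))) :
    (∃ α : ℝ, 0 < α ∧ α < 1 ∧
      ∃ S : EuclideanSpace ℝ (Fin n) → EuclideanSpace ℝ (Fin n),
        (∀ x y, ‖S x - S y‖ ≤ ‖x - y‖) ∧ ∀ x, T x = (1 - α) • x + α • S x) ∧
    ∀ zstar, T zstar = zstar →
      IsMinOn (fun x => f x + g x + h x) Set.univ (proxf zstar) := by
  have htL : t * L < 2 := by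
    have := (lt_div_iff₀ hL).mp ht2
    linarith
  have h4tL : (0:ℝ) < 4 - t * L := by linarith
  set κ : ℝ := (4 - t * L) / 2 with hκdef
  have hκpos : 0 < κ := by rw [hκdef]; linarith
  set α : ℝ := 2 / (4 - t * L) with hαdef
  have hαpos : 0 < α := by rw [hαdef]; positivity
  have hακ : α * κ = 1 := by rw [hαdef, hκdef]; field_simp
  constructor
  · refine ⟨α, hαpos, ?_, fun x => x + κ • (T x - x), ?_, ?_⟩
    · rw [hαdef]
      rw [div_lt_one h4tL]
      nlinarith [mul_pos ht hL]
    · -- nonexpansiveness of S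
      intro x y
      have hTx := hT x
      have hTy := hT y
      set px := proxf x with hpx
      set py := proxf y with hpy
      set ux := gradient h px with hux
      set uy := gradient h py with huy
      set wx := (2:ℝ) • px - x - t • ux with hwx
      set wy := (2:ℝ) • py - y - t • uy with hwy
      set qx := proxg wx with hqx
      set qy := proxg wy with hqy
      -- key inner product facts
      have hfa : ‖px - py‖ ^ 2 ≤ ⟪x - y, px - py⟫ :=
        dys_prox_firm f hf_conv ht (hproxf x) (hproxf y)
      have hfb : ‖qx - qy‖ ^ 2 ≤ ⟪wx - wy, qx - qy⟫ :=
        dys_prox_firm g hg_conv ht (hproxg wx) (hproxg wy)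
      have hfc : ‖ux - uy‖ ^ 2 ≤ L * ⟪ux - uy, px - py⟫ := by
        rw [hux, huy]
        exact dys_coco h hh_conv hh_diff hL hh_smooth px py
      have hcs : ⟪ux - uy, px - py⟫ - ⟪ux - uy, qx - qy⟫
          ≤ ‖ux - uy‖ * ‖px - py - (qx - qy)‖ := by
        rw [← inner_sub_right]
        have harg : px - py - (qx - qy) = (px - py) - (qx - qy) := by abel
        rw [← harg]
        exact real_inner_le_norm _ _
      have hwd : wx - wy = (2:ℝ) • (px - py) - (x - y) - t • (ux - uy) := by
        rw [hwx, hwy]; module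
      have hfb' : ‖qx - qy‖ ^ 2 ≤ 2 * ⟪px - py, qx - qy⟫ - ⟪x - y, qx - qy⟫
          - t * ⟪ux - uy, qx - qy⟫ := by
        have e : (⟪wx - wy, qx - qy⟫ : ℝ) = 2 * ⟪px - py, qx - qy⟫ - ⟪x - y, qx - qy⟫
            - t * ⟪ux - uy, qx - qy⟫ := by
          rw [hwd, inner_sub_left, inner_sub_left, real_inner_smul_left, real_inner_smul_left]
        linarith [hfb, e]
      have hX : ‖px - py - (qx - qy)‖ ^ 2
          = ‖px - py‖ ^ 2 - 2 * ⟪px - py, qx - qy⟫ + ‖qx - qy‖ ^ 2 := by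
        have harg : px - py - (qx - qy) = (px - py) - (qx - qy) := by abel
        rw [harg, norm_sub_sq_real]
      -- master inequality
      have master : 2 * (⟪x - y, qx - qy⟫ - ⟪x - y, px - py⟫)
          + κ * ‖px - py - (qx - qy)‖ ^ 2 ≤ 0 := by
        have stepA : 2 * ‖px - py - (qx - qy)‖ ^ 2 + 2 * (t * ⟪ux - uy, qx - qy⟫)
            ≤ 2 * (⟪x - y, px - py⟫ - ⟪x - y, qx - qy⟫) := by
          linarith [hfa, hfb', hX]
        have stepB := mul_le_mul_of_nonneg_left stepA hL.le
        have stepC := mul_le_mul_of_nonneg_left hcs (mul_nonneg hL.le ht.le)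
        have stepD := mul_le_mul_of_nonneg_left hfc ht.le
        have stepE : (0:ℝ) ≤ (t / 2) * (L * ‖px - py - (qx - qy)‖
            - 2 * ‖ux - uy‖) ^ 2 := by positivity
        have step6 : L * (2 * (⟪x - y, qx - qy⟫ - ⟪x - y, px - py⟫)
            + κ * ‖px - py - (qx - qy)‖ ^ 2) ≤ 0 := by
          rw [hκdef]
          nlinarith [stepB, stepC, stepD, stepE]
        nlinarith [step6, hL, mul_pos hL hκpos]
      -- conclude nonexpansiveness
      have hTxe : T x - x = qx - px := by rw [hTx]; abel
      have hTye : T y - y = qy - py := by rw [hTy]; abel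
      have hS : (x + κ • (T x - x)) - (y + κ • (T y - y))
          = (x - y) + κ • ((qx - qy) - (px - py)) := by
        rw [hTxe, hTye]; module
      simp only []
      rw [hS]
      have hsq : ‖(x - y) + κ • ((qx - qy) - (px - py))‖ ^ 2 ≤ ‖x - y‖ ^ 2 := by
        rw [norm_add_sq_real, real_inner_smul_right, norm_smul, Real.norm_eq_abs,
          abs_of_pos hκpos, mul_pow]
        have e1 : (⟪x - y, (qx - qy) - (px - py)⟫ : ℝ)
            = ⟪x - y, qx - qy⟫ - ⟪x - y, px - py⟫ := inner_sub_right _ _ _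
        have e2 : ‖(qx - qy) - (px - py)‖ = ‖px - py - (qx - qy)‖ := by
          rw [← norm_neg]
          congr 1
          abel
        rw [e1, e2]
        nlinarith [master, hκpos, mul_le_mul_of_nonneg_left master hκpos.le]
      nlinarith [hsq, norm_nonneg ((x - y) + κ • ((qx - qy) - (px - py))), norm_nonneg (x - y)]
    · -- averaged decomposition
      intro x
      have h1 : (1 - α) • x + α • (x + κ • (T x - x)) = x + (α * κ) • (T x - x) := by
        module
      rw [h1, hακ, one_smul]
      abel
  · -- fixed points minimize
    intro zstar hfix
    set p := proxf zstar with hp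
    set u := gradient h p with hu
    set w := (2:ℝ) • p - zstar - t • u with hw
    have hfixw : proxg w = p := by
      have h1 : zstar - p + proxg w = zstar := by rw [← hT zstar]; exact hfix
      have h3 : zstar - p + proxg w = zstar - p + p := by rw [h1]; abel
      exact add_left_cancel h3
    intro x _
    simp only [Set.mem_setOf_eq]
    have hfineq := dys_prox_subgrad f hf_conv ht (hproxf zstar) x
    have hgmin : IsMinOn (fun z => g z + (1 / (2 * t)) * ‖z - w‖ ^ 2) Set.univ p := by
      rw [← hfixw]; exact hproxg w
    have hgineq := dys_prox_subgrad g hg_conv ht hgmin x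
    have hhineq := dys_convex_grad_ineq h hh_conv hh_diff p x
    -- w - p = p - zstar - t • u
    have hwp : w - p = (p - zstar) - t • u := by rw [hw]; module
    have e1 : (⟪w - p, x - p⟫ : ℝ) = ⟪p - zstar, x - p⟫ - t * ⟪u, x - p⟫ := by
      rw [hwp, inner_sub_left, real_inner_smul_left]
    have e2 : (⟪p - zstar, x - p⟫ : ℝ) = -⟪zstar - p, x - p⟫ := by
      rw [show p - zstar = -(zstar - p) by abel, inner_neg_left]
    rw [e1, e2] at hgineq
    -- combine
    have hsum : -t * ⟪u, x - p⟫ ≤ t * (f x - f p) + t * (g x - g p) := by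
      linarith [hfineq, hgineq]
    have hhineq' : (⟪u, x - p⟫ : ℝ) ≤ h x - h p := by
      rw [hu] at *
      linarith [hhineq]
    nlinarith [hsum, hhineq', ht, mul_le_mul_of_nonneg_left hhineq' ht.le]
end
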